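/- Let (f_t) be a W₁,₊-geodesic on an oriented graph G with g_t > 0. For a geodesic γ of length n ≥ 2, define C_γ(t) = [g_t(γ₀γ₁)···g_t(γ_{n−1}γ_n)] / [f_t(γ₁)···f_t(γ_{n−1})] (with C_γ(t) = g_t(γ₀γ₁) for n = 1 and C_γ(t) = f_t(γ₀) for n = 0). Then ∂/∂t C_γ(t) = Σ_{x₀∈E(γ₀)} C_{x₀∪γ}(t) − Σ_{x₂∈F(γ_n)} C_{γ∪x₂}(t), where x₀∪γ and γ∪x₂ denote the geodesics obtained by prepending x₀ or appending x₂. -/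

import Mathlib

open scoped BigOperators Classical

noncomputable section

variable {V : Type*}

/-- The quantity C_γ associated to a geodesic γ of length n. -/
def Cgeo (f : V → ℝ) (g : V → V → ℝ) (γ : ℕ → V) (n : ℕ) : ℝ :=
  if n = 0 then f (γ 0)
  else (∏ i ∈ Finset.range n, g (γ i) (γ (i + 1))) / ∏ j ∈ Finset.Ico 1 n, f (γ j)

/-- Prepend a vertex to a path. -/
def prepend (x : V) (γ : ℕ → V) : ℕ → V := fun i => if i = 0 then x else γ (i - 1)

/-- Append a vertex to a path of length n. -/
def appendAt (γ : ℕ → V) (n : ℕ) (y : V) : ℕ → V := fun i => if i = n + 1 then y else γ i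

lemma Cgeo_succ (f : V → ℝ) (g : V → V → ℝ) (γ : ℕ → V) (n : ℕ) (hf0 : f (γ n) ≠ 0) :
    Cgeo f g γ (n + 1) = Cgeo f g γ n * g (γ n) (γ (n + 1)) / f (γ n) := by
  rcases n with _ | m
  · simp only [Cgeo, if_pos rfl, Nat.one_ne_zero, if_neg]
    rw [Finset.prod_range_one, Finset.Ico_self, Finset.prod_empty, div_one]
    field_simp
    simp only [Nat.zero_add, Nat.one_ne_zero, ↓reduceIte]
    ring
  · simp only [Cgeo, Nat.succ_ne_zero, if_neg, reduceIte]
    rw [Finset.prod_range_succ, Finset.prod_Ico_succ_top (by omega : 1 ≤ m + 1),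
      div_mul_eq_mul_div, div_div]

lemma Cgeo_congr (f : V → ℝ) (g : V → V → ℝ) {γ γ' : ℕ → V} (n : ℕ)
    (hγ : ∀ i ≤ n, γ i = γ' i) : Cgeo f g γ n = Cgeo f g γ' n := by
  unfold Cgeo
  split
  · rw [hγ 0 (Nat.zero_le _)]
  · have h1 : ∏ i ∈ Finset.range n, g (γ i) (γ (i + 1))
        = ∏ i ∈ Finset.range n, g (γ' i) (γ' (i + 1)) :=
      Finset.prod_congr rfl fun i hi => by
        have hin : i < n := Finset.mem_range.mp hi
        rw [hγ i hin.le, hγ (i + 1) hin]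
    have h2 : ∏ j ∈ Finset.Ico 1 n, f (γ j) = ∏ j ∈ Finset.Ico 1 n, f (γ' j) :=
      Finset.prod_congr rfl fun j hj => by rw [hγ j (Finset.mem_Ico.mp hj).2.le]
    rw [h1, h2]

lemma Cgeo_pos {f : V → ℝ} {g : V → V → ℝ} (hf : ∀ x, 0 < f x) (γ : ℕ → V) (n : ℕ)
    (hg : ∀ i < n, 0 < g (γ i) (γ (i + 1))) : 0 < Cgeo f g γ n := by
  unfold Cgeo
  split
  · exact hf _
  · exact div_pos (Finset.prod_pos fun i hi => hg i (Finset.mem_range.mp hi))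
      (Finset.prod_pos fun j _ => hf _)

lemma sum_ite_mul_div {ι : Type*} [Fintype ι] (P : ι → Prop) (a : ι → ℝ) (c d : ℝ) :
    (∑ x, if P x then c * a x / d else 0) = c * (∑ x, if P x then a x else 0) / d := by
  rw [Finset.mul_sum, Finset.sum_div]
  exact Finset.sum_congr rfl fun x _ => by split_ifs <;> simp

theorem Cgeo_deriv
    [Fintype V] (R : V → V → Prop)
    (f : ℝ → V → ℝ) (g : ℝ → V → V → ℝ) (h : ℝ → V → V → V → ℝ)
    (hfpos : ∀ t x, 0 < f t x)
    (hgpos : ∀ t x y, R x y → 0 < g t x y)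
    (hf : ∀ t x, HasDerivAt (fun s => f s x)
      (-((∑ y, if R x y then g t x y else 0) - ∑ z, if R z x then g t z x else 0)) t)
    (hg : ∀ t x y, R x y → HasDerivAt (fun s => g s x y)
      (-((∑ w, if R y w then h t x y w else 0) - ∑ z, if R z x then h t z x y else 0)) t)
    (hBB : ∀ t x₀ x₁ x₂, R x₀ x₁ → R x₁ x₂ →
      f t x₁ * h t x₀ x₁ x₂ = g t x₀ x₁ * g t x₁ x₂)
    (γ : ℕ → V) (n : ℕ) (hpath : ∀ i < n, R (γ i) (γ (i + 1)))
    (t : ℝ) :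
    HasDerivAt (fun s => Cgeo (f s) (g s) γ n)
      ((∑ x₀, if R x₀ (γ 0) then Cgeo (f t) (g t) (prepend x₀ γ) (n + 1) else 0) -
        ∑ x₂, if R (γ n) x₂ then Cgeo (f t) (g t) (appendAt γ n x₂) (n + 1) else 0) t := by
  induction n with
  | zero =>
    have hfun : (fun s => Cgeo (f s) (g s) γ 0) = fun s => f s (γ 0) :=
      funext fun s => by simp [Cgeo]
    rw [hfun]
    convert hf t (γ 0) using 1
    have e1 : ∀ x₀ : V, Cgeo (f t) (g t) (prepend x₀ γ) 1 = g t x₀ (γ 0) := fun x₀ => by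
      simp [Cgeo, prepend]
    have e2 : ∀ x₂ : V, Cgeo (f t) (g t) (appendAt γ 0 x₂) 1 = g t (γ 0) x₂ := fun x₂ => by
      simp [Cgeo, appendAt]
    simp only [e1, e2]
    ring
  | succ n ih =>
    have hR : R (γ n) (γ (n + 1)) := hpath n (Nat.lt_succ_self n)
    have hC := ih (fun i hi => hpath i (by omega))
    have key := (hC.mul (hg t (γ n) (γ (n + 1)) hR)).div (hf t (γ n))
      (ne_of_gt (hfpos t (γ n)))
    have hfun : (fun s => Cgeo (f s) (g s) γ (n + 1))
        = fun s => Cgeo (f s) (g s) γ n * g s (γ n) (γ (n + 1)) / f s (γ n) :=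
      funext fun s => Cgeo_succ _ _ _ _ (ne_of_gt (hfpos s (γ n)))
    rw [hfun]
    refine key.congr_deriv ?_
    have hfn : f t (γ n) ≠ 0 := ne_of_gt (hfpos t (γ n))
    have hf1 : f t (γ (n + 1)) ≠ 0 := ne_of_gt (hfpos t (γ (n + 1)))
    have hCsucc : Cgeo (f t) (g t) γ (n + 1)
        = Cgeo (f t) (g t) γ n * g t (γ n) (γ (n + 1)) / f t (γ n) :=
      Cgeo_succ _ _ _ _ hfn
    have S1 : (∑ x₀ : V, if R x₀ (γ 0) then Cgeo (f t) (g t) (prepend x₀ γ) (n + 1 + 1) else 0)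
        = (∑ x₀ : V, if R x₀ (γ 0) then Cgeo (f t) (g t) (prepend x₀ γ) (n + 1) else 0) *
          (g t (γ n) (γ (n + 1)) / f t (γ n)) := by
      rw [Finset.sum_mul]
      refine Finset.sum_congr rfl fun x₀ _ => ?_
      split_ifs with hx
      · have hp1 : prepend x₀ γ (n + 1) = γ n := by simp [prepend]
        have hp2 : prepend x₀ γ (n + 1 + 1) = γ (n + 1) := by simp [prepend]
        rw [Cgeo_succ (f t) (g t) (prepend x₀ γ) (n + 1) (by rw [hp1]; exact hfn),
          hp1, hp2, mul_div_assoc]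
      · simp
    have S2 : (∑ x₂ : V, if R (γ (n + 1)) x₂
            then Cgeo (f t) (g t) (appendAt γ (n + 1) x₂) (n + 1 + 1) else 0)
        = Cgeo (f t) (g t) γ n * g t (γ n) (γ (n + 1)) / f t (γ n) *
            (∑ x₂ : V, if R (γ (n + 1)) x₂ then g t (γ (n + 1)) x₂ else 0) /
            f t (γ (n + 1)) := by
      rw [← sum_ite_mul_div]
      refine Finset.sum_congr rfl fun x₂ _ => ?_
      split_ifs with hx
      · have ha1 : appendAt γ (n + 1) x₂ (n + 1) = γ (n + 1) := by simp [appendAt]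
        have ha2 : appendAt γ (n + 1) x₂ (n + 1 + 1) = x₂ := by simp [appendAt]
        have hgc : Cgeo (f t) (g t) (appendAt γ (n + 1) x₂) (n + 1)
            = Cgeo (f t) (g t) γ (n + 1) :=
          Cgeo_congr _ _ _ fun i hi => by simp [appendAt, Nat.ne_of_lt (by omega : i < n + 2)]
        rw [Cgeo_succ (f t) (g t) (appendAt γ (n + 1) x₂) (n + 1) (by rw [ha1]; exact hf1),
          ha1, ha2, hgc, hCsucc]
      · rfl
    have S3 : (∑ x₂ : V, if R (γ n) x₂
            then Cgeo (f t) (g t) (appendAt γ n x₂) (n + 1) else 0)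
        = Cgeo (f t) (g t) γ n * (∑ x₂ : V, if R (γ n) x₂ then g t (γ n) x₂ else 0) /
            f t (γ n) := by
      rw [← sum_ite_mul_div]
      refine Finset.sum_congr rfl fun x₂ _ => ?_
      split_ifs with hx
      · have ha1 : appendAt γ n x₂ n = γ n := by simp [appendAt]
        have ha2 : appendAt γ n x₂ (n + 1) = x₂ := by simp [appendAt]
        have hgc : Cgeo (f t) (g t) (appendAt γ n x₂) n = Cgeo (f t) (g t) γ n :=
          Cgeo_congr _ _ _ fun i hi => by simp [appendAt, Nat.ne_of_lt (by omega : i < n + 1)]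
        rw [Cgeo_succ (f t) (g t) (appendAt γ n x₂) n (by rw [ha1]; exact hfn),
          ha1, ha2, hgc]
      · rfl
    have H1 : (∑ w : V, if R (γ (n + 1)) w then h t (γ n) (γ (n + 1)) w else 0)
        = g t (γ n) (γ (n + 1)) *
            (∑ w : V, if R (γ (n + 1)) w then g t (γ (n + 1)) w else 0) /
            f t (γ (n + 1)) := by
      rw [← sum_ite_mul_div]
      refine Finset.sum_congr rfl fun w _ => ?_
      split_ifs with hw
      · rw [eq_div_iff hf1]
        linear_combination hBB t (γ n) (γ (n + 1)) w hR hw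
      · rfl
    have H2 : (∑ z : V, if R z (γ n) then h t z (γ n) (γ (n + 1)) else 0)
        = g t (γ n) (γ (n + 1)) *
            (∑ z : V, if R z (γ n) then g t z (γ n) else 0) / f t (γ n) := by
      rw [← sum_ite_mul_div]
      refine Finset.sum_congr rfl fun z _ => ?_
      split_ifs with hz
      · rw [eq_div_iff hfn]
        linear_combination hBB t z (γ n) (γ (n + 1)) hz hR
      · rfl
    rw [S1, S2, S3, H1, H2]
    simp only [Pi.mul_apply]
    field_simp
    ring
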